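/- Every entanglement witness on ℂ² ⊗ ℂ² has exactly one negative eigenvalue, exactly three positive eigenvalues, and trivial kernel. -/

import Mathlib

open Matrix
open scoped ComplexOrder

/-- The simple tensor `φ ⊗ χ` as a vector in `ℂ² ⊗ ℂ²`. -/
def tensorVec {d1 d2 : ℕ} (φ : Fin d1 → ℂ) (χ : Fin d2 → ℂ) : Fin d1 × Fin d2 → ℂ :=
  fun p => φ p.1 * χ p.2

/-- The span of the eigenvectors of `W` corresponding to negative eigenvalues. -/
noncomputable def negSpace {d1 d2 : ℕ}
    (W : Matrix (Fin d1 × Fin d2) (Fin d1 × Fin d2) ℂ) :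
    Submodule ℂ (Fin d1 × Fin d2 → ℂ) :=
  ⨆ (μ : ℝ) (_ : μ < 0), Module.End.eigenspace (Matrix.toLin' W) (μ : ℂ)

/-- The span of the eigenvectors of `W` corresponding to positive eigenvalues. -/
noncomputable def posSpace {d1 d2 : ℕ}
    (W : Matrix (Fin d1 × Fin d2) (Fin d1 × Fin d2) ℂ) :
    Submodule ℂ (Fin d1 × Fin d2 → ℂ) :=
  ⨆ (μ : ℝ) (_ : 0 < μ), Module.End.eigenspace (Matrix.toLin' W) (μ : ℂ)

section Aux

/-- A homogeneous quadratic over ℂ has a nontrivial zero. -/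
lemma aux_quad_root (A B C : ℂ) :
    ∃ s t : ℂ, ¬(s = 0 ∧ t = 0) ∧ A * s ^ 2 + B * (s * t) + C * t ^ 2 = 0 := by
  by_cases hA : A = 0
  · exact ⟨1, 0, by simp, by simp [hA]⟩
  · obtain ⟨d, hd⟩ := IsAlgClosed.exists_pow_nat_eq (B ^ 2 - 4 * A * C) (n := 2) (by norm_num)
    exact ⟨-B + d, 2 * A, fun hc => hA (by simpa using hc.2), by linear_combination A * hd⟩

/-- A 2×2 "matrix" (as a vector on `Fin 2 × Fin 2`) with vanishing determinant is a
simple tensor. -/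
lemma aux_tensor_of_det (w : Fin 2 × Fin 2 → ℂ)
    (h : w (0, 0) * w (1, 1) = w (0, 1) * w (1, 0)) :
    ∃ φ χ : Fin 2 → ℂ, tensorVec φ χ = w := by
  have hfun : ∀ (φ χ : Fin 2 → ℂ), (∀ i j : Fin 2, tensorVec φ χ (i, j) = w (i, j)) →
      tensorVec φ χ = w := fun φ χ hk => funext fun p => by obtain ⟨i, j⟩ := p; exact hk i j
  rw [Prod.mk_zero_zero, Prod.mk_one_one] at h
  by_cases h00 : w 0 ≠ 0
  · refine ⟨![w 0, w (1, 0)], ![1, w (0, 1) / w 0], hfun _ _ fun i j => ?_⟩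
    fin_cases i <;> fin_cases j <;>
        simp only [tensorVec, Matrix.cons_val_zero, Matrix.cons_val_one, Matrix.head_cons,
          Fin.mk_one, Fin.zero_eta, Prod.mk_zero_zero, Prod.mk_one_one]
    · ring
    · field_simp
    · ring
    · field_simp
      linear_combination -h
  · push_neg at h00
    by_cases h01 : w (0, 1) ≠ 0
    · refine ⟨![w (0, 1), w 1], ![w 0 / w (0, 1), 1], hfun _ _ fun i j => ?_⟩
      fin_cases i <;> fin_cases j <;>
          simp only [tensorVec, Matrix.cons_val_zero, Matrix.cons_val_one, Matrix.head_cons,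
            Fin.mk_one, Fin.zero_eta, Prod.mk_zero_zero, Prod.mk_one_one]
      · field_simp
      · ring
      · field_simp
        linear_combination h
      · ring
    · push_neg at h01
      refine ⟨![0, 1], ![w (1, 0), w 1], hfun _ _ fun i j => ?_⟩
      fin_cases i <;> fin_cases j <;>
          simp only [tensorVec, Matrix.cons_val_zero, Matrix.cons_val_one, Matrix.head_cons,
            Fin.mk_one, Fin.zero_eta, Prod.mk_zero_zero, Prod.mk_one_one]
      · simp [h00]
      · simp [h01]
      · ring
      · ring

/-- In the span of any two vectors there is a nontrivial combination which is a simple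
tensor. -/
lemma aux_prod_in_span (a b : Fin 2 × Fin 2 → ℂ) :
    ∃ s t : ℂ, ¬(s = 0 ∧ t = 0) ∧ ∃ φ χ : Fin 2 → ℂ,
      tensorVec φ χ = s • a + t • b := by
  obtain ⟨s, t, hst, hq⟩ := aux_quad_root
    (a (0, 0) * a (1, 1) - a (0, 1) * a (1, 0))
    (a (0, 0) * b (1, 1) + b (0, 0) * a (1, 1) - a (0, 1) * b (1, 0) - b (0, 1) * a (1, 0))
    (b (0, 0) * b (1, 1) - b (0, 1) * b (1, 0))
  refine ⟨s, t, hst, aux_tensor_of_det _ ?_⟩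
  simp only [Pi.add_apply, Pi.smul_apply, smul_eq_mul]
  linear_combination hq

lemma aux_psd_of_re {n : Type*} [Fintype n] [DecidableEq n] {W : Matrix n n ℂ}
    (hherm : W.IsHermitian) (h : ∀ x : n → ℂ, 0 ≤ (star x ⬝ᵥ W *ᵥ x).re) :
    W.PosSemidef := by
  refine Matrix.PosSemidef.of_dotProduct_mulVec_nonneg hherm fun x => ?_
  rw [Complex.le_def]
  refine ⟨by simpa using h x, ?_⟩
  have hsa : (starRingEnd ℂ) (star x ⬝ᵥ W *ᵥ x) = star x ⬝ᵥ W *ᵥ x := by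
    calc (starRingEnd ℂ) (star x ⬝ᵥ W *ᵥ x) = star (W *ᵥ x) ⬝ᵥ star (star x) :=
          (star_dotProduct_star _ _).symm
    _ = (star x ᵥ* Wᴴ) ⬝ᵥ x := by rw [star_mulVec, star_star]
    _ = star x ⬝ᵥ W *ᵥ x := by rw [hherm.eq, dotProduct_mulVec]
  have him := congrArg Complex.im hsa
  rw [Complex.conj_im] at him
  simp only [Complex.zero_im]
  linarith

lemma aux_trace_nonneg {n : Type*} [Fintype n] [DecidableEq n]
    {ρ W : Matrix n n ℂ} (hρ : ρ.PosSemidef) (hW : W.PosSemidef) :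
    0 ≤ (Matrix.trace (ρ * W)).re := by
  obtain ⟨B, hB⟩ : ∃ B : Matrix n n ℂ, ρ = Bᴴ * B := by
    open scoped MatrixOrder in exact CStarAlgebra.nonneg_iff_eq_star_mul_self.mp hρ.nonneg
  have h1 : Matrix.trace (ρ * W) = Matrix.trace (B * W * Bᴴ) := by
    rw [hB, Matrix.trace_mul_cycle, Matrix.trace_mul_cycle]
  have h2 : (B * W * Bᴴ).PosSemidef := hW.mul_mul_conjTranspose_same B
  rw [h1, Matrix.trace]
  have key : ∀ i, 0 ≤ ((B * W * Bᴴ) i i).re := by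
    intro i
    have e : star (Pi.single i 1) ⬝ᵥ ((B * W * Bᴴ) *ᵥ Pi.single i 1) = (B * W * Bᴴ) i i := by
      simp [dotProduct, Pi.single_apply, mulVec_single, apply_ite, Finset.sum_ite_eq']
    have := h2.dotProduct_mulVec_nonneg (Pi.single i 1)
    rw [e, Complex.le_def] at this
    simpa using this.1
  have hsum : (∑ i, Matrix.diag (B * W * Bᴴ) i).re = ∑ i, ((B * W * Bᴴ) i i).re := by
    simp [Complex.re_sum, Matrix.diag]
  rw [hsum]
  exact Finset.sum_nonneg fun i _ => key i

lemma aux_tensor_ne_zero {φ χ : Fin 2 → ℂ} (h : tensorVec φ χ ≠ 0) : φ ≠ 0 ∧ χ ≠ 0 := by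
  constructor
  · rintro rfl; exact h (funext fun p => by simp [tensorVec])
  · rintro rfl; exact h (funext fun p => by simp [tensorVec])

lemma aux_dot_self (φ : Fin 2 → ℂ) (h : φ ≠ 0) : star φ ⬝ᵥ φ ≠ 0 := by
  have he : star φ ⬝ᵥ φ = ((Complex.normSq (φ 0) + Complex.normSq (φ 1) : ℝ) : ℂ) := by
    simp [dotProduct, Fin.sum_univ_two, Complex.normSq_eq_conj_mul_self]
  rw [he]
  intro hc
  rw [Complex.ofReal_eq_zero] at hc
  have h0 : Complex.normSq (φ 0) = 0 ∧ Complex.normSq (φ 1) = 0 := by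
    constructor <;> nlinarith [Complex.normSq_nonneg (φ 0), Complex.normSq_nonneg (φ 1)]
  exact h (funext fun i => by
    fin_cases i <;> simp [Complex.normSq_eq_zero.mp h0.1, Complex.normSq_eq_zero.mp h0.2])

/-- The orthogonal complement of a vector in ℂ². -/
def perp (φ : Fin 2 → ℂ) : Fin 2 → ℂ := ![-(starRingEnd ℂ (φ 1)), starRingEnd ℂ (φ 0)]

lemma aux_complete (φ χ : Fin 2 → ℂ) (y : Fin 2 × Fin 2 → ℂ) :
    ((star φ ⬝ᵥ φ) * (star χ ⬝ᵥ χ)) • y =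
      (star (tensorVec φ χ) ⬝ᵥ y) • tensorVec φ χ +
      (star (tensorVec (perp φ) χ) ⬝ᵥ y) • tensorVec (perp φ) χ +
      (star (tensorVec φ (perp χ)) ⬝ᵥ y) • tensorVec φ (perp χ) +
      (star (tensorVec (perp φ) (perp χ)) ⬝ᵥ y) • tensorVec (perp φ) (perp χ) := by
  have key : ∀ i j : Fin 2, ((star φ ⬝ᵥ φ) * (star χ ⬝ᵥ χ)) • y (i, j) =
      (star (tensorVec φ χ) ⬝ᵥ y) * tensorVec φ χ (i, j) +
      (star (tensorVec (perp φ) χ) ⬝ᵥ y) * tensorVec (perp φ) χ (i, j) +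
      (star (tensorVec φ (perp χ)) ⬝ᵥ y) * tensorVec φ (perp χ) (i, j) +
      (star (tensorVec (perp φ) (perp χ)) ⬝ᵥ y) * tensorVec (perp φ) (perp χ) (i, j) := by
    simp only [Fin.forall_fin_two, tensorVec, perp, dotProduct, Fintype.sum_prod_type,
      Fin.sum_univ_two, Pi.star_apply, smul_eq_mul, Matrix.cons_val_zero, Matrix.cons_val_one,
      Matrix.head_cons, star_neg, RCLike.star_def, map_neg, _root_.map_mul, Complex.conj_conj]
    refine ⟨⟨?_, ?_⟩, ?_, ?_⟩ <;> ring
  exact funext fun p => key p.1 p.2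

lemma aux_ff (φ χ : Fin 2 → ℂ) :
    star (tensorVec (perp φ) (perp χ)) ⬝ᵥ tensorVec (perp φ) (perp χ)
      = (star φ ⬝ᵥ φ) * (star χ ⬝ᵥ χ) := by
  simp only [tensorVec, perp, dotProduct, Fintype.sum_prod_type, Fin.sum_univ_two,
    Pi.star_apply, Matrix.cons_val_zero, Matrix.cons_val_one, Matrix.head_cons, star_neg,
    RCLike.star_def, map_neg, _root_.map_mul, Complex.conj_conj]
  ring

lemma aux_p_expand (φ χ : Fin 2 → ℂ) (b c d : ℂ) (hd : d ≠ 0) :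
    tensorVec (fun i => (c / d) * φ i + perp φ i) (fun j => b * χ j + d * perp χ j)
      = ((b * c) / d) • tensorVec φ χ + b • tensorVec (perp φ) χ
        + c • tensorVec φ (perp χ) + d • tensorVec (perp φ) (perp χ) := by
  have key : ∀ i j : Fin 2,
      ((c / d) * φ i + perp φ i) * (b * χ j + d * perp χ j)
      = ((b * c) / d) * (φ i * χ j) + b * (perp φ i * χ j)
        + c * (φ i * perp χ j) + d * (perp φ i * perp χ j) := by
    intro i j
    field_simp
    ring
  exact funext fun p => by
    simpa [tensorVec] using key p.1 p.2

/-- If a witness has a simple tensor in its kernel, it is positive semidefinite. -/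
lemma aux_ker_psd (W : Matrix (Fin 2 × Fin 2) (Fin 2 × Fin 2) ℂ) (hherm : W.IsHermitian)
    (hpos : ∀ (φ χ : Fin 2 → ℂ), 0 ≤ (star (tensorVec φ χ) ⬝ᵥ W *ᵥ (tensorVec φ χ)).re)
    (φ χ : Fin 2 → ℂ) (hw0 : tensorVec φ χ ≠ 0) (hker : W *ᵥ tensorVec φ χ = 0)
    (x : Fin 2 × Fin 2 → ℂ) : 0 ≤ (star x ⬝ᵥ W *ᵥ x).re := by
  obtain ⟨hφ, hχ⟩ := aux_tensor_ne_zero hw0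
  have hN0 : (star φ ⬝ᵥ φ) * (star χ ⬝ᵥ χ) ≠ 0 :=
    mul_ne_zero (aux_dot_self φ hφ) (aux_dot_self χ hχ)
  have hψW : ∀ z, star (tensorVec φ χ) ⬝ᵥ (W *ᵥ z) = 0 := by
    intro z
    rw [dotProduct_mulVec]
    have h0 : star (tensorVec φ χ) ᵥ* W = 0 := by
      conv_lhs => rw [← hherm.eq]
      rw [← star_mulVec, hker, star_zero]
    rw [h0, zero_dotProduct]
  have hQinv : ∀ (z : Fin 2 × Fin 2 → ℂ) (a : ℂ),
      (star (z + a • tensorVec φ χ) ⬝ᵥ W *ᵥ (z + a • tensorVec φ χ)) = star z ⬝ᵥ W *ᵥ z := by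
    intro z a
    rw [mulVec_add, mulVec_smul, hker, smul_zero, add_zero, star_add, add_dotProduct,
      star_smul, smul_dotProduct, hψW z, smul_zero, add_zero]
  have hstep : ∀ x : Fin 2 × Fin 2 → ℂ, star (tensorVec (perp φ) (perp χ)) ⬝ᵥ x ≠ 0 →
      0 ≤ (star x ⬝ᵥ W *ᵥ x).re := by
    intro x hd
    have hp := aux_p_expand φ χ (star (tensorVec (perp φ) χ) ⬝ᵥ x)
      (star (tensorVec φ (perp χ)) ⬝ᵥ x) (star (tensorVec (perp φ) (perp χ)) ⬝ᵥ x) hd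
    have key : ((star φ ⬝ᵥ φ) * (star χ ⬝ᵥ χ)) • x =
        tensorVec (fun i => ((star (tensorVec φ (perp χ)) ⬝ᵥ x) /
            (star (tensorVec (perp φ) (perp χ)) ⬝ᵥ x)) * φ i + perp φ i)
          (fun j => (star (tensorVec (perp φ) χ) ⬝ᵥ x) * χ j +
            (star (tensorVec (perp φ) (perp χ)) ⬝ᵥ x) * perp χ j)
        + ((star (tensorVec φ χ) ⬝ᵥ x) -
            (star (tensorVec (perp φ) χ) ⬝ᵥ x) * (star (tensorVec φ (perp χ)) ⬝ᵥ x) /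
            (star (tensorVec (perp φ) (perp χ)) ⬝ᵥ x)) • tensorVec φ χ := by
      rw [hp, aux_complete φ χ x]
      module
    have hQ : star (((star φ ⬝ᵥ φ) * (star χ ⬝ᵥ χ)) • x) ⬝ᵥ W *ᵥ
        (((star φ ⬝ᵥ φ) * (star χ ⬝ᵥ χ)) • x) = star (tensorVec (fun i => ((star (tensorVec φ (perp χ)) ⬝ᵥ x) /
            (star (tensorVec (perp φ) (perp χ)) ⬝ᵥ x)) * φ i + perp φ i)
          (fun j => (star (tensorVec (perp φ) χ) ⬝ᵥ x) * χ j +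
            (star (tensorVec (perp φ) (perp χ)) ⬝ᵥ x) * perp χ j)) ⬝ᵥ W *ᵥ (tensorVec (fun i => ((star (tensorVec φ (perp χ)) ⬝ᵥ x) /
            (star (tensorVec (perp φ) (perp χ)) ⬝ᵥ x)) * φ i + perp φ i)
          (fun j => (star (tensorVec (perp φ) χ) ⬝ᵥ x) * χ j +
            (star (tensorVec (perp φ) (perp χ)) ⬝ᵥ x) * perp χ j)) := by
      rw [key]
      exact hQinv _ _
    have hL : star (((star φ ⬝ᵥ φ) * (star χ ⬝ᵥ χ)) • x) ⬝ᵥ W *ᵥ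
        (((star φ ⬝ᵥ φ) * (star χ ⬝ᵥ χ)) • x)
        = ((Complex.normSq ((star φ ⬝ᵥ φ) * (star χ ⬝ᵥ χ)) : ℝ) : ℂ) * (star x ⬝ᵥ W *ᵥ x) := by
      rw [mulVec_smul, star_smul, smul_dotProduct, dotProduct_smul]
      rw [Complex.normSq_eq_conj_mul_self]
      simp only [smul_eq_mul, RCLike.star_def]
      ring
    have hre := hpos (fun i => ((star (tensorVec φ (perp χ)) ⬝ᵥ x) /
            (star (tensorVec (perp φ) (perp χ)) ⬝ᵥ x)) * φ i + perp φ i)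
          (fun j => (star (tensorVec (perp φ) χ) ⬝ᵥ x) * χ j +
            (star (tensorVec (perp φ) (perp χ)) ⬝ᵥ x) * perp χ j)
    rw [← hQ, hL, Complex.re_ofReal_mul] at hre
    have hNpos : 0 < Complex.normSq ((star φ ⬝ᵥ φ) * (star χ ⬝ᵥ χ)) :=
      Complex.normSq_pos.mpr hN0
    nlinarith
  by_cases hd : star (tensorVec (perp φ) (perp χ)) ⬝ᵥ x = 0
  · by_contra hneg
    push_neg at hneg
    set f := tensorVec (perp φ) (perp χ) with hfdef
    set Q0 := (star x ⬝ᵥ W *ᵥ x).re with hQ0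
    set A := (star f ⬝ᵥ W *ᵥ x).re + (star x ⬝ᵥ W *ᵥ f).re with hA
    set Bc := (star f ⬝ᵥ W *ᵥ f).re with hBc
    have hDpos : (0:ℝ) < |A| + |Bc| + 1 := by positivity
    set t : ℝ := min 1 (-Q0 / (|A| + |Bc| + 1)) with ht
    have ht0 : 0 < t := lt_min one_pos (div_pos (by linarith) hDpos)
    have ht1 : t ≤ 1 := min_le_left _ _
    have htD : t * (|A| + |Bc| + 1) ≤ -Q0 := by
      rw [← le_div_iff₀ hDpos]
      exact min_le_right _ _
    have hd' : star f ⬝ᵥ (x + (t : ℂ) • f) ≠ 0 := by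
      rw [dotProduct_add, hd, zero_add, dotProduct_smul, hfdef, aux_ff, smul_eq_mul]
      exact mul_ne_zero (by exact_mod_cast ht0.ne') hN0
    have hQ' := hstep (x + (t : ℂ) • f) hd'
    have hexp : (star (x + (t : ℂ) • f) ⬝ᵥ W *ᵥ (x + (t : ℂ) • f)) = (star x ⬝ᵥ W *ᵥ x)
        + (t : ℂ) * ((star f ⬝ᵥ W *ᵥ x) + (star x ⬝ᵥ W *ᵥ f))
        + (t : ℂ) ^ 2 * (star f ⬝ᵥ W *ᵥ f) := by
      rw [mulVec_add, mulVec_smul, star_add, star_smul, add_dotProduct, dotProduct_add,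
        dotProduct_add, smul_dotProduct, smul_dotProduct, dotProduct_smul, dotProduct_smul]
      simp only [smul_eq_mul, RCLike.star_def, Complex.conj_ofReal]
      ring
    rw [hexp] at hQ'
    have hre' : ((star x ⬝ᵥ W *ᵥ x)
        + (t : ℂ) * ((star f ⬝ᵥ W *ᵥ x) + (star x ⬝ᵥ W *ᵥ f))
        + (t : ℂ) ^ 2 * (star f ⬝ᵥ W *ᵥ f)).re = Q0 + t * A + t ^ 2 * Bc := by
      simp only [Complex.add_re, ← Complex.ofReal_pow, Complex.re_ofReal_mul, hQ0, hA, hBc]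
      try ring
    rw [hre'] at hQ'
    have h1 : t * A ≤ t * |A| := mul_le_mul_of_nonneg_left (le_abs_self A) ht0.le
    have h2 : t ^ 2 * Bc ≤ t ^ 2 * |Bc| := mul_le_mul_of_nonneg_left (le_abs_self Bc) (sq_nonneg t)
    have ht2 : t ^ 2 ≤ t := by nlinarith
    have h3 : t ^ 2 * |Bc| ≤ t * |Bc| := mul_le_mul_of_nonneg_right ht2 (abs_nonneg Bc)
    nlinarith
  · exact hstep x hd

end Aux


theorem two_qubit_witness_signature
    (W : Matrix (Fin 2 × Fin 2) (Fin 2 × Fin 2) ℂ) (hherm : W.IsHermitian)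
    (hpos : ∀ (φ χ : Fin 2 → ℂ),
      0 ≤ (star (tensorVec φ χ) ⬝ᵥ W.mulVec (tensorVec φ χ)).re)
    (hdet : ∃ ρ : Matrix (Fin 2 × Fin 2) (Fin 2 × Fin 2) ℂ,
      ρ.PosSemidef ∧ ρ.trace = 1 ∧ Complex.re (Matrix.trace (ρ * W)) < 0) :
    Module.finrank ℂ (negSpace W) = 1 ∧
    Module.finrank ℂ (posSpace W) = 3 ∧
    LinearMap.ker (Matrix.toLin' W) = ⊥ := by
  classical
  set g : (Fin 2 × Fin 2) → (Fin 2 × Fin 2 → ℂ) := fun i => ⇑(hherm.eigenvectorBasis i) with hg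
  set ev : (Fin 2 × Fin 2) → ℝ := hherm.eigenvalues with hev
  have hcd : ∀ (a b : Fin 2 × Fin 2 → ℂ), star a ⬝ᵥ b = starRingEnd ℂ (star b ⬝ᵥ a) := by
    intro a b
    simp only [dotProduct, Pi.star_apply, map_sum, _root_.map_mul, Complex.conj_conj,
      RCLike.star_def]
    exact Finset.sum_congr rfl fun i _ => mul_comm _ _
  have hWg : ∀ i, W *ᵥ g i = (ev i : ℂ) • g i := by
    intro i
    have h := hherm.mulVec_eigenvectorBasis i
    rw [hg, hev]
    rw [h]
    funext k
    simp [Complex.real_smul]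
  have horth : ∀ i j, star (g i) ⬝ᵥ g j = if i = j then 1 else 0 := by
    intro i j
    have := orthonormal_iff_ite.mp hherm.eigenvectorBasis.orthonormal i j
    simpa [EuclideanSpace.inner_eq_star_dotProduct, dotProduct_comm _ (star _)] using this
  have hexp : ∀ v : Fin 2 × Fin 2 → ℂ, ∑ i, (star (g i) ⬝ᵥ v) • g i = v := by
    intro v
    have h := congrArg (WithLp.linearEquiv 2 ℂ (Fin 2 × Fin 2 → ℂ))
      (hherm.eigenvectorBasis.sum_repr' ((WithLp.equiv 2 _).symm v))
    rw [map_sum] at h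
    simpa [EuclideanSpace.inner_eq_star_dotProduct, dotProduct_comm _ (star _)] using h
  have hgne : ∀ i, g i ≠ 0 := by
    intro i hzz
    have h := horth i i
    rw [hzz] at h
    simp at h
  have hdotsum : ∀ (a : Fin 2 × Fin 2 → ℂ) (F : (Fin 2 × Fin 2) → (Fin 2 × Fin 2 → ℂ)),
      a ⬝ᵥ (∑ i, F i) = ∑ i, a ⬝ᵥ F i := by
    intro a F
    simp only [dotProduct, Finset.sum_apply, Finset.mul_sum]
    exact Finset.sum_comm
  have hQform : ∀ v : Fin 2 × Fin 2 → ℂ,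
      (star v ⬝ᵥ W *ᵥ v).re = ∑ i, ev i * Complex.normSq (star (g i) ⬝ᵥ v) := by
    intro v
    have h1 : W *ᵥ v = ∑ i, ((star (g i) ⬝ᵥ v) * (ev i : ℂ)) • g i := by
      conv_lhs => rw [← hexp v]
      rw [show W *ᵥ (∑ i, (star (g i) ⬝ᵥ v) • g i) = ∑ i, W *ᵥ ((star (g i) ⬝ᵥ v) • g i) from
        map_sum W.mulVecLin _ _]
      exact Finset.sum_congr rfl fun i _ => by rw [mulVec_smul, hWg i, smul_smul]
    have h2 : star v ⬝ᵥ W *ᵥ v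
        = ∑ i, (((ev i : ℝ) : ℂ) * ((Complex.normSq (star (g i) ⬝ᵥ v) : ℝ) : ℂ)) := by
      rw [h1, hdotsum]
      refine Finset.sum_congr rfl fun i _ => ?_
      rw [dotProduct_smul, smul_eq_mul, hcd v (g i)]
      have hmc := Complex.mul_conj (star (g i) ⬝ᵥ v)
      linear_combination ((ev i : ℝ) : ℂ) * hmc
    rw [h2, Complex.re_sum]
    exact Finset.sum_congr rfl fun i _ => by
      rw [← Complex.ofReal_mul]
      exact Complex.ofReal_re _
  have hpaircoeff : ∀ (i j k : Fin 2 × Fin 2) (s t : ℂ),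
      star (g k) ⬝ᵥ (s • g i + t • g j)
        = (if k = i then s else 0) + (if k = j then t else 0) := by
    intro i j k s t
    rw [dotProduct_add, dotProduct_smul, dotProduct_smul, horth, horth]
    simp only [smul_eq_mul, mul_ite, mul_one, mul_zero]
  have hpairQ : ∀ (i j : Fin 2 × Fin 2), i ≠ j → ∀ s t : ℂ,
      (star (s • g i + t • g j) ⬝ᵥ W *ᵥ (s • g i + t • g j)).re
        = ev i * Complex.normSq s + ev j * Complex.normSq t := by
    intro i j hij s t
    rw [hQform]
    rw [← Finset.sum_subset (Finset.subset_univ {i, j})]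
    · rw [Finset.sum_pair hij]
      rw [hpaircoeff i j i s t, hpaircoeff i j j s t]
      simp [hij, Ne.symm hij]
    · intro k _ hk
      simp only [Finset.mem_insert, Finset.mem_singleton] at hk
      push_neg at hk
      rw [hpaircoeff i j k s t]
      simp [hk.1, hk.2]
  have hspan_mem : ∀ (S : Finset (Fin 2 × Fin 2)) (v : Fin 2 × Fin 2 → ℂ),
      (∀ i, i ∉ S → star (g i) ⬝ᵥ v = 0) → v ∈ Submodule.span ℂ (g '' S) := by
    intro S v h
    rw [← hexp v]
    refine Submodule.sum_mem _ fun i _ => ?_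
    by_cases hi : i ∈ S
    · exact Submodule.smul_mem _ _ (Submodule.subset_span ⟨i, hi, rfl⟩)
    · rw [h i hi, zero_smul]
      exact Submodule.zero_mem _
  have hli : LinearIndependent ℂ g := by
    rw [Fintype.linearIndependent_iff]
    intro l hl i
    have h := congrArg (fun w => star (g i) ⬝ᵥ w) hl
    simp only [dotProduct_zero] at h
    rw [hdotsum] at h
    simp only [dotProduct_smul, horth, smul_eq_mul, mul_ite, mul_one, mul_zero] at h
    rwa [Finset.sum_ite_eq, if_pos (Finset.mem_univ i)] at h
  have hrank : ∀ S : Finset (Fin 2 × Fin 2),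
      Module.finrank ℂ (Submodule.span ℂ (g '' S)) = S.card := by
    intro S
    have hli' := hli.comp (Subtype.val : {x // x ∈ S} → _) Subtype.val_injective
    have hspan_eq : Submodule.span ℂ (g '' ↑S)
        = Submodule.span ℂ (Set.range (g ∘ (Subtype.val : {x // x ∈ S} → _))) := by
      rw [Set.range_comp]
      congr 1
      ext y
      simp
    rw [hspan_eq, finrank_span_eq_card hli']
    exact Fintype.card_coe S
  have heig_coeff : ∀ (μ : ℝ) (v : Fin 2 × Fin 2 → ℂ), W *ᵥ v = (μ : ℂ) • v →
      ∀ i, ev i ≠ μ → star (g i) ⬝ᵥ v = 0 := by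
    intro μ v hv i hne
    have hgWv : star (g i) ⬝ᵥ (W *ᵥ v) = (ev i : ℂ) * (star (g i) ⬝ᵥ v) := by
      rw [dotProduct_mulVec]
      have h0 : star (g i) ᵥ* W = (ev i : ℂ) • star (g i) := by
        conv_lhs => rw [← hherm.eq]
        rw [← star_mulVec, hWg i, star_smul]
        congr 1
        simp [RCLike.star_def, Complex.conj_ofReal]
      rw [h0, smul_dotProduct, smul_eq_mul]
    rw [hv, dotProduct_smul, smul_eq_mul] at hgWv
    by_contra hc
    have heq : (μ : ℂ) = (ev i : ℂ) := mul_right_cancel₀ hc hgWv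
    exact hne (by exact_mod_cast heq.symm)
  set Sneg := Finset.univ.filter (fun i => ev i < 0) with hSneg
  set Spos := Finset.univ.filter (fun i => 0 < ev i) with hSpos
  set Szer := Finset.univ.filter (fun i => ev i = 0) with hSzer
  have hnegspan : negSpace W = Submodule.span ℂ (g '' Sneg) := by
    apply le_antisymm
    · refine iSup_le fun μ => iSup_le fun hμ => ?_
      intro v hv
      rw [Module.End.mem_eigenspace_iff, Matrix.toLin'_apply] at hv
      refine hspan_mem _ _ fun i hi => ?_
      have hnlt : ¬ ev i < 0 := fun hev' =>
        hi (Finset.mem_filter.mpr ⟨Finset.mem_univ i, hev'⟩)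
      exact heig_coeff μ v hv i fun he => hnlt (he ▸ hμ)
    · rw [Submodule.span_le]
      rintro _ ⟨i, hi, rfl⟩
      have hiev : ev i < 0 := by
        have := Finset.mem_coe.mp hi
        exact (Finset.mem_filter.mp this).2
      show g i ∈ (⨆ (μ : ℝ) (_ : μ < 0), Module.End.eigenspace (Matrix.toLin' W) (μ : ℂ))
      refine Submodule.mem_iSup_of_mem (ev i) ?_
      refine Submodule.mem_iSup_of_mem hiev ?_
      exact Module.End.mem_eigenspace_iff.mpr (by rw [Matrix.toLin'_apply]; exact hWg i)
  have hposspan : posSpace W = Submodule.span ℂ (g '' Spos) := by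
    apply le_antisymm
    · refine iSup_le fun μ => iSup_le fun hμ => ?_
      intro v hv
      rw [Module.End.mem_eigenspace_iff, Matrix.toLin'_apply] at hv
      refine hspan_mem _ _ fun i hi => ?_
      have hnlt : ¬ 0 < ev i := fun hev' =>
        hi (Finset.mem_filter.mpr ⟨Finset.mem_univ i, hev'⟩)
      exact heig_coeff μ v hv i fun he => hnlt (he ▸ hμ)
    · rw [Submodule.span_le]
      rintro _ ⟨i, hi, rfl⟩
      have hiev : 0 < ev i := by
        have := Finset.mem_coe.mp hi
        exact (Finset.mem_filter.mp this).2
      show g i ∈ (⨆ (μ : ℝ) (_ : 0 < μ), Module.End.eigenspace (Matrix.toLin' W) (μ : ℂ))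
      refine Submodule.mem_iSup_of_mem (ev i) ?_
      refine Submodule.mem_iSup_of_mem hiev ?_
      exact Module.End.mem_eigenspace_iff.mpr (by rw [Matrix.toLin'_apply]; exact hWg i)
  have hkerspan : LinearMap.ker (Matrix.toLin' W) = Submodule.span ℂ (g '' Szer) := by
    apply le_antisymm
    · intro v hv
      rw [LinearMap.mem_ker, Matrix.toLin'_apply] at hv
      refine hspan_mem _ _ fun i hi => ?_
      have hne : ev i ≠ 0 := fun hev' =>
        hi (Finset.mem_filter.mpr ⟨Finset.mem_univ i, hev'⟩)
      exact heig_coeff 0 v (by rw [hv]; simp) i hne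
    · rw [Submodule.span_le]
      rintro _ ⟨i, hi, rfl⟩
      have hiev : ev i = 0 := by
        have := Finset.mem_coe.mp hi
        exact (Finset.mem_filter.mp this).2
      show g i ∈ LinearMap.ker (Matrix.toLin' W)
      rw [LinearMap.mem_ker, Matrix.toLin'_apply, hWg i, hiev]
      simp
  have hPSDfalse : (∀ x : Fin 2 × Fin 2 → ℂ, 0 ≤ (star x ⬝ᵥ W *ᵥ x).re) → False := by
    intro hpsd
    obtain ⟨ρ, hρ, -, htr⟩ := hdet
    exact absurd (aux_trace_nonneg hρ (aux_psd_of_re hherm hpsd)) (not_le.mpr htr)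
  have hnegne : ∃ j, ev j < 0 := by
    by_contra h
    push_neg at h
    exact hPSDfalse fun x => by
      rw [hQform x]
      exact Finset.sum_nonneg fun i _ => mul_nonneg (h i) (Complex.normSq_nonneg _)
  have hcardneg : Sneg.card = 1 := by
    have hle : Sneg.card ≤ 1 := by
      by_contra hgt
      push_neg at hgt
      obtain ⟨i, hi, j, hj, hij⟩ := Finset.one_lt_card.mp hgt
      have hievlt : ev i < 0 := (Finset.mem_filter.mp hi).2
      have hjevlt : ev j < 0 := (Finset.mem_filter.mp hj).2
      obtain ⟨s, t, hst, φ, χ, hw⟩ := aux_prod_in_span (g i) (g j)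
      have h0 := hpos φ χ
      rw [hw, hpairQ i j hij s t] at h0
      rcases not_and_or.mp hst with hs | hts
      · nlinarith [Complex.normSq_pos.mpr hs, Complex.normSq_nonneg t]
      · nlinarith [Complex.normSq_pos.mpr hts, Complex.normSq_nonneg s]
    obtain ⟨j, hj⟩ := hnegne
    have hpos' : 0 < Sneg.card :=
      Finset.card_pos.mpr ⟨j, Finset.mem_filter.mpr ⟨Finset.mem_univ j, hj⟩⟩
    omega
  have hzerempty : Szer = ∅ := by
    by_contra hne
    obtain ⟨i, hi⟩ := Finset.nonempty_of_ne_empty hne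
    have hiev : ev i = 0 := (Finset.mem_filter.mp hi).2
    obtain ⟨j, hjev⟩ := hnegne
    have hij : i ≠ j := fun h => by rw [h] at hiev; linarith
    obtain ⟨s, t, hst, φ, χ, hw⟩ := aux_prod_in_span (g i) (g j)
    have h0 := hpos φ χ
    rw [hw, hpairQ i j hij s t, hiev] at h0
    have ht : t = 0 := by
      by_contra hc
      nlinarith [Complex.normSq_pos.mpr hc, Complex.normSq_nonneg s]
    have hs : s ≠ 0 := fun hc => hst ⟨hc, ht⟩
    have hker : W *ᵥ tensorVec φ χ = 0 := by
      rw [hw, ht, zero_smul, add_zero, mulVec_smul, hWg i, hiev]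
      simp
    have hw0 : tensorVec φ χ ≠ 0 := by
      rw [hw, ht, zero_smul, add_zero]
      exact smul_ne_zero hs (hgne i)
    exact hPSDfalse (aux_ker_psd W hherm hpos φ χ hw0 hker)
  have hcardpos : Spos.card = 3 := by
    have hnozero : ∀ i, ev i ≠ 0 := by
      intro i hi
      have hmem : i ∈ Szer := Finset.mem_filter.mpr ⟨Finset.mem_univ i, hi⟩
      rw [hzerempty] at hmem
      exact absurd hmem (Finset.notMem_empty i)
    have hSpos' : Spos = Finset.univ.filter (fun i => ¬ ev i < 0) := by
      rw [hSpos]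
      ext k
      simp only [Finset.mem_filter, Finset.mem_univ, true_and]
      constructor
      · intro h; linarith
      · intro h
        rcases lt_trichotomy (ev k) 0 with h' | h' | h'
        · exact absurd h' h
        · exact absurd h' (hnozero k)
        · exact h'
    have htot := Finset.card_filter_add_card_filter_not
      (s := (Finset.univ : Finset (Fin 2 × Fin 2))) (p := fun i => ev i < 0)
    have hc4 : (Finset.univ : Finset (Fin 2 × Fin 2)).card = 4 := by decide
    rw [hSpos']
    rw [hSneg] at hcardneg
    omega
  refine ⟨?_, ?_, ?_⟩
  · rw [hnegspan, hrank, hcardneg]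
  · rw [hposspan, hrank, hcardpos]
  · rw [hkerspan, hzerempty]
    simp
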